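/- Parseval–Goldstein identity with generalized Fourier sine transform: ∫₀^∞ y^{λ-1} L_{α,μ}{f(t); y} F_{s,δ,μ}{g(x); y} dy = (1/μ) Γ(λ/μ) ∫₀^∞ t^{α-1} f(t) [∫₀^∞ x^{δ-1} (t^{2μ} + x^{2μ})^{-λ/(2μ)} sin((λ/μ) arctan(x^μ/t^μ)) g(x) dx] dt. -/

import Mathlib

open MeasureTheory Set

namespace PGaux
open Filter

lemma aux_cont (s : ℝ) (z : ℂ) :
    ContinuousOn (fun t : ℝ => (t : ℂ) ^ ((s : ℂ) - 1) * Complex.exp (-(z * t))) (Ioi 0) := by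
  apply ContinuousOn.mul
  · refine ContinuousOn.cpow Complex.continuous_ofReal.continuousOn continuousOn_const ?_
    intro t ht
    exact Complex.ofReal_mem_slitPlane.2 ht
  · exact ((Complex.continuous_exp.comp
      ((continuous_const.mul Complex.continuous_ofReal).neg))).continuousOn

lemma aux_norm {s : ℝ} {z : ℂ} {t : ℝ} (ht : 0 < t) :
    ‖(t : ℂ) ^ ((s : ℂ) - 1) * Complex.exp (-(z * t))‖
      = t ^ (s - 1) * Real.exp (-(z.re * t)) := by
  rw [norm_mul,
    Complex.norm_cpow_eq_rpow_re_of_pos ht, Complex.norm_exp]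
  simp [Complex.neg_re, Complex.mul_re]

lemma aux_integrable {s : ℝ} (hs : 0 < s) {z : ℂ} (hz : 0 < z.re) :
    IntegrableOn (fun t : ℝ => (t : ℂ) ^ ((s : ℂ) - 1) * Complex.exp (-(z * t))) (Ioi 0) := by
  have hmaj : IntegrableOn (fun t : ℝ => t ^ (s - 1) * Real.exp (-z.re * t)) (Ioi 0) := by
    simpa [Real.rpow_one] using
      integrableOn_rpow_mul_exp_neg_mul_rpow (by linarith : (-1:ℝ) < s - 1) zero_lt_one hz
  refine hmaj.mono' ((aux_cont s z).aestronglyMeasurable measurableSet_Ioi) ?_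
  filter_upwards [ae_restrict_mem measurableSet_Ioi] with t ht
  rw [aux_norm ht, neg_mul]

lemma hasDeriv_F {s : ℝ} (hs : 0 < s) {z : ℂ} (hz : 0 < z.re) :
    DifferentiableAt ℂ
      (fun w => ∫ t in Ioi (0:ℝ), (t : ℂ) ^ ((s : ℂ) - 1) * Complex.exp (-(w * t))) z := by
  have hε : 0 < z.re / 2 := by linarith
  have bound_int : IntegrableOn (fun t : ℝ => t ^ s * Real.exp (-(z.re / 2) * t)) (Ioi 0) := by
    simpa [Real.rpow_one] using
      integrableOn_rpow_mul_exp_neg_mul_rpow (by linarith : (-1:ℝ) < s) zero_lt_one hε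
  have h_bound : ∀ᵐ (t : ℝ) ∂(volume.restrict (Ioi (0:ℝ))), ∀ w ∈ Metric.ball z (z.re / 2),
      ‖(t : ℂ) ^ ((s : ℂ) - 1) * Complex.exp (-(w * t)) * (-t)‖
        ≤ t ^ s * Real.exp (-(z.re / 2) * t) := by
    filter_upwards [ae_restrict_mem measurableSet_Ioi] with t ht
    intro w hw
    have hwre : z.re / 2 ≤ w.re := by
      have h1 : |(w - z).re| ≤ ‖w - z‖ := Complex.abs_re_le_norm _
      have h2 : ‖w - z‖ < z.re / 2 := by
        rwa [Metric.mem_ball, Complex.dist_eq] at hw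
      have h3 : |w.re - z.re| < z.re / 2 := lt_of_le_of_lt (by simpa using h1) h2
      have := abs_lt.mp h3
      linarith [this.1]
    have hnorm : ‖(t : ℂ) ^ ((s : ℂ) - 1) * Complex.exp (-(w * t)) * (-t)‖
        = t ^ (s - 1) * Real.exp (-(w.re * t)) * t := by
      rw [norm_mul, aux_norm ht]
      congr 1
      simp [abs_of_pos (mem_Ioi.mp ht)]
    rw [hnorm]
    have hts : t ^ (s - 1) * t = t ^ s := by
      nth_rewrite 2 [← Real.rpow_one t]
      rw [← Real.rpow_add ht]
      norm_num
    have h0 : (0:ℝ) ≤ t ^ (s - 1) := Real.rpow_nonneg ht.le _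
    have htp : (0:ℝ) < t := ht
    have hexp : Real.exp (-(w.re * t)) ≤ Real.exp (-(z.re / 2) * t) := by
      apply Real.exp_le_exp.2
      nlinarith [mul_nonneg (sub_nonneg.2 hwre) htp.le]
    calc t ^ (s - 1) * Real.exp (-(w.re * t)) * t
        ≤ t ^ (s - 1) * Real.exp (-(z.re / 2) * t) * t := by
          exact mul_le_mul_of_nonneg_right (mul_le_mul_of_nonneg_left hexp h0) htp.le
      _ = t ^ s * Real.exp (-(z.re / 2) * t) := by
          rw [mul_right_comm, hts]
  have h_diff : ∀ᵐ (t : ℝ) ∂(volume.restrict (Ioi (0:ℝ))), ∀ w ∈ Metric.ball z (z.re / 2),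
      HasDerivAt (fun w : ℂ => (t : ℂ) ^ ((s : ℂ) - 1) * Complex.exp (-(w * t)))
        ((t : ℂ) ^ ((s : ℂ) - 1) * Complex.exp (-(w * t)) * (-t)) w := by
    filter_upwards [ae_restrict_mem measurableSet_Ioi] with t ht
    intro w hw
    have h1 : HasDerivAt (fun w : ℂ => -(w * t)) (-(t:ℂ)) w :=
      (hasDerivAt_mul_const (t : ℂ)).neg
    have h2 := h1.cexp
    have h3 := h2.const_mul ((t : ℂ) ^ ((s : ℂ) - 1))
    simpa [mul_assoc] using h3
  have key := hasDerivAt_integral_of_dominated_loc_of_deriv_le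
    (F := fun (w : ℂ) (t : ℝ) => (t : ℂ) ^ ((s : ℂ) - 1) * Complex.exp (-(w * t)))
    (F' := fun (w : ℂ) (t : ℝ) => (t : ℂ) ^ ((s : ℂ) - 1) * Complex.exp (-(w * t)) * (-t))
    (bound := fun t => t ^ s * Real.exp (-(z.re / 2) * t)) (Metric.ball_mem_nhds z hε)
    (Eventually.of_forall fun w => (aux_cont s w).aestronglyMeasurable measurableSet_Ioi)
    (aux_integrable hs hz)
    (((aux_cont s z).mul (Complex.continuous_ofReal.neg.continuousOn)).aestronglyMeasurable
      measurableSet_Ioi)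
    h_bound bound_int h_diff
  exact key.2.differentiableAt


lemma gamma_halfplane {s : ℝ} (hs : 0 < s) {z : ℂ} (hz : 0 < z.re) :
    ∫ t in Ioi (0:ℝ), (t : ℂ) ^ ((s : ℂ) - 1) * Complex.exp (-(z * t))
      = Complex.Gamma s * z ^ (-(s : ℂ)) := by
  set F : ℂ → ℂ := fun w => ∫ t in Ioi (0:ℝ), (t : ℂ) ^ ((s : ℂ) - 1) * Complex.exp (-(w * t))
    with hF
  set G : ℂ → ℂ := fun w => Complex.Gamma s * w ^ (-(s : ℂ)) with hG
  have hUo : IsOpen {w : ℂ | 0 < w.re} := isOpen_lt continuous_const Complex.continuous_re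
  have hFa : AnalyticOnNhd ℂ F {w : ℂ | 0 < w.re} :=
    DifferentiableOn.analyticOnNhd
      (fun w hw => (hasDeriv_F hs hw).differentiableWithinAt) hUo
  have hGa : AnalyticOnNhd ℂ G {w : ℂ | 0 < w.re} := by
    refine DifferentiableOn.analyticOnNhd (fun w hw => DifferentiableAt.differentiableWithinAt ?_) hUo
    exact (differentiableAt_id.cpow (differentiableAt_const _)
      (Complex.mem_slitPlane_iff.2 (Or.inl hw))).const_mul _
  have hreal : ∀ r : ℝ, 0 < r → F r = G r := by
    intro r hr
    have h1 := Complex.integral_cpow_mul_exp_neg_mul_Ioi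
      (a := (s : ℂ)) (by simpa using hs) hr
    have h2 : ((r : ℂ))⁻¹ ^ (s : ℂ) = ((r : ℂ)) ^ (-(s : ℂ)) := by
      rw [Complex.inv_cpow _ _ (by
        rw [Complex.arg_ofReal_of_nonneg hr.le]; exact Ne.symm Real.pi_ne_zero),
        ← Complex.cpow_neg]
    simp only [hF, hG]
    rw [h1, one_div, h2, mul_comm]
  have hfreq : ∃ᶠ w in nhdsWithin (1 : ℂ) {(1:ℂ)}ᶜ, F w = G w := by
    have htend : Tendsto (fun n : ℕ => ((1 + ((n:ℝ)+1)⁻¹ : ℝ) : ℂ)) atTop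
        (nhdsWithin (1:ℂ) {(1:ℂ)}ᶜ) := by
      rw [tendsto_nhdsWithin_iff]
      constructor
      · have h1 : Tendsto (fun n : ℕ => (1 + ((n:ℝ)+1)⁻¹ : ℝ)) atTop (nhds 1) := by
          simpa [one_div] using
            tendsto_const_nhds.add (tendsto_one_div_add_atTop_nhds_zero_nat (𝕜 := ℝ))
        have := (Complex.continuous_ofReal.tendsto (1:ℝ)).comp h1
        simpa [Function.comp_def] using this
      · refine Eventually.of_forall fun n => ?_
        simp only [mem_compl_iff, mem_singleton_iff]
        intro hcon
        have : (1 + ((n:ℝ)+1)⁻¹ : ℝ) = 1 := by exact_mod_cast hcon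
        have hp : (0:ℝ) < ((n:ℝ)+1)⁻¹ := by positivity
        linarith
    exact htend.frequently (Eventually.of_forall fun n => hreal _ (by positivity)).frequently
  have := hFa.eqOn_of_preconnected_of_frequently_eq hGa
    (convex_halfSpace_re_gt 0).isPreconnected (by simp : (1:ℂ) ∈ {w : ℂ | 0 < w.re}) hfreq
  exact this hz


lemma sine_gamma {s a : ℝ} (b : ℝ) (hs : 0 < s) (ha : 0 < a) :
    ∫ u in Ioi (0:ℝ), u ^ (s - 1) * (Real.exp (-(a * u)) * Real.sin (b * u))
      = Real.Gamma s * ((a ^ 2 + b ^ 2) ^ (-(s / 2)) * Real.sin (s * Real.arctan (b / a))) := by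
  set z : ℂ := (a : ℂ) - (b : ℂ) * Complex.I with hzdef
  have hz_re : z.re = a := by simp [hzdef]
  have hz_im : z.im = -b := by simp [hzdef]
  have hz : 0 < z.re := hz_re ▸ ha
  have him := congrArg Complex.im (gamma_halfplane hs hz)
  have hL : (∫ t in Ioi (0:ℝ), (t:ℂ) ^ ((s:ℂ) - 1) * Complex.exp (-(z * t))).im
      = ∫ t in Ioi (0:ℝ), t ^ (s - 1) * (Real.exp (-(a * t)) * Real.sin (b * t)) := by
    have hrfl : Complex.im = RCLike.im := rfl
    rw [hrfl, ← integral_im (aux_integrable hs hz)]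
    refine setIntegral_congr_fun measurableSet_Ioi fun t ht => ?_
    have h1 : (t:ℂ) ^ ((s:ℂ) - 1) = ((t ^ (s - 1) : ℝ) : ℂ) := by
      rw [Complex.ofReal_cpow (le_of_lt ht)]
      norm_cast
    have h2re : (-(z * (t:ℂ))).re = -(a * t) := by
      simp [Complex.mul_re, hz_re, hz_im]
    have h2im : (-(z * (t:ℂ))).im = b * t := by
      simp [Complex.mul_im, hz_re, hz_im]
    show ((t:ℂ) ^ ((s:ℂ) - 1) * Complex.exp (-(z * t))).im = _
    rw [h1, Complex.mul_im, Complex.exp_im, Complex.exp_re, h2re, h2im]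
    simp
  have hzabs : ‖z‖ = Real.sqrt (a ^ 2 + b ^ 2) := by
    rw [Complex.norm_def, Complex.normSq_apply, hz_re, hz_im]
    ring_nf
  have hzne : z ≠ 0 := by
    intro h
    rw [h] at hz_re
    simp at hz_re
    exact ha.ne (by linarith)
  have harg : Complex.arg z = - Real.arctan (b / a) := by
    have hbd := Complex.abs_arg_lt_pi_div_two_iff.mpr (Or.inl hz)
    obtain ⟨h1, h2⟩ := abs_lt.mp hbd
    have htan : Real.tan z.arg = -(b / a) := by
      rw [Complex.tan_arg, hz_re, hz_im]
      ring
    rw [← Real.arctan_tan h1 h2, htan, Real.arctan_neg]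
  have hR : (Complex.Gamma (s:ℂ) * z ^ (-(s:ℂ))).im
      = Real.Gamma s * ((a ^ 2 + b ^ 2) ^ (-(s / 2)) * Real.sin (s * Real.arctan (b / a))) := by
    have hpow : (z ^ (-(s:ℂ))).im
        = Real.exp (Real.log ‖z‖ * (-s)) * Real.sin (Complex.arg z * (-s)) := by
      rw [Complex.cpow_def_of_ne_zero hzne, Complex.exp_im]
      congr 2
      · simp [Complex.mul_re, Complex.log_re, Complex.log_im]
      · simp [Complex.mul_im, Complex.log_re, Complex.log_im]
    have habs0 : (0:ℝ) < a ^ 2 + b ^ 2 := by positivity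
    have hexp : Real.exp (Real.log ‖z‖ * (-s)) = (a ^ 2 + b ^ 2) ^ (-(s / 2)) := by
      rw [← Real.rpow_def_of_pos (by rw [hzabs]; positivity) (-s), hzabs,
        Real.sqrt_eq_rpow, ← Real.rpow_mul habs0.le]
      congr 1
      ring
    have hsin : Real.sin (Complex.arg z * (-s)) = Real.sin (s * Real.arctan (b / a)) := by
      rw [harg]
      ring_nf
    rw [Complex.Gamma_ofReal, Complex.mul_im, hpow, hexp, hsin]
    simp
  exact hL.symm.trans (him.trans hR)


lemma key_integral {lam μ t x : ℝ} (hμ : 0 < μ) (hlam : 0 < lam) (ht : 0 < t) (hx : 0 < x) :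
    ∫ y in Ioi (0:ℝ), y ^ (lam - 1) * Real.exp (-(y ^ μ * t ^ μ)) * Real.sin (y ^ μ * x ^ μ)
      = (1 / μ) * Real.Gamma (lam / μ) *
        ((t ^ (2 * μ) + x ^ (2 * μ)) ^ (-(lam / (2 * μ))) *
          Real.sin ((lam / μ) * Real.arctan (x ^ μ / t ^ μ))) := by
  set s := lam / μ with hsdef
  have hs : 0 < s := div_pos hlam hμ
  set a := t ^ μ with hadef
  set b := x ^ μ with hbdef
  have ha : 0 < a := Real.rpow_pos_of_pos ht μ
  have hb : 0 < b := Real.rpow_pos_of_pos hx μ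
  have hsub := MeasureTheory.integral_comp_rpow_Ioi
    (fun u => u ^ (s - 1) * (Real.exp (-(a * u)) * Real.sin (b * u))) (ne_of_gt hμ)
  have hptwise : ∀ y ∈ Ioi (0:ℝ),
      y ^ (lam - 1) * Real.exp (-(y ^ μ * t ^ μ)) * Real.sin (y ^ μ * x ^ μ)
        = (1 / μ) * ((|μ| * y ^ (μ - 1)) •
            ((y ^ μ) ^ (s - 1) * (Real.exp (-(a * y ^ μ)) * Real.sin (b * y ^ μ)))) := by
    intro y hy
    have hy0 : (0:ℝ) < y := hy
    have e1 : (y ^ μ) ^ (s - 1) = y ^ (lam - μ) := by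
      rw [← Real.rpow_mul hy0.le]
      congr 1
      rw [hsdef, mul_sub, mul_one, mul_div_assoc', mul_comm μ lam, mul_div_assoc, div_self hμ.ne', mul_one]
    have e2 : y ^ (μ - 1) * y ^ (lam - μ) = y ^ (lam - 1) := by
      rw [← Real.rpow_add hy0]
      congr 1
      ring
    rw [smul_eq_mul, abs_of_pos hμ, e1, mul_comm a (y ^ μ), mul_comm b (y ^ μ), ← e2]
    field_simp
    ring
  calc ∫ y in Ioi (0:ℝ), y ^ (lam - 1) * Real.exp (-(y ^ μ * t ^ μ)) * Real.sin (y ^ μ * x ^ μ)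
      = ∫ y in Ioi (0:ℝ), (1 / μ) * ((|μ| * y ^ (μ - 1)) •
          ((y ^ μ) ^ (s - 1) * (Real.exp (-(a * y ^ μ)) * Real.sin (b * y ^ μ)))) :=
        setIntegral_congr_fun measurableSet_Ioi hptwise
    _ = (1 / μ) * ∫ y in Ioi (0:ℝ), (|μ| * y ^ (μ - 1)) •
          ((y ^ μ) ^ (s - 1) * (Real.exp (-(a * y ^ μ)) * Real.sin (b * y ^ μ))) :=
        integral_const_mul _ _
    _ = (1 / μ) * ∫ u in Ioi (0:ℝ), u ^ (s - 1) * (Real.exp (-(a * u)) * Real.sin (b * u)) := by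
        rw [hsub]
    _ = (1 / μ) * (Real.Gamma s *
          ((a ^ 2 + b ^ 2) ^ (-(s / 2)) * Real.sin (s * Real.arctan (b / a)))) := by
        rw [sine_gamma b hs ha]
    _ = (1 / μ) * Real.Gamma (lam / μ) *
        ((t ^ (2 * μ) + x ^ (2 * μ)) ^ (-(lam / (2 * μ))) *
          Real.sin ((lam / μ) * Real.arctan (x ^ μ / t ^ μ))) := by
        have p1 : a ^ 2 = t ^ (2 * μ) := by
          rw [hadef, ← Real.rpow_natCast (t ^ μ) 2, ← Real.rpow_mul ht.le]
          norm_num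
          ring_nf
        have p2 : b ^ 2 = x ^ (2 * μ) := by
          rw [hbdef, ← Real.rpow_natCast (x ^ μ) 2, ← Real.rpow_mul hx.le]
          norm_num
          ring_nf
        have p3 : s / 2 = lam / (2 * μ) := by
          rw [hsdef, div_div, mul_comm]
        rw [p1, p2, p3, hsdef]
        ring

end PGaux

open PGaux in
theorem parseval_goldstein_fourier_sine (α δ lam μ : ℝ) (f g : ℝ → ℝ)
    (hμ : 0 < μ) (hα : μ < α) (hlam : 0 < lam / (2 * μ))
    (hf : Measurable f) (hg : Measurable g)
    (hint : IntegrableOn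
      (fun p : ℝ × ℝ × ℝ =>
        p.1 ^ (lam - 1) *
          (p.2.1 ^ (α - 1) * Real.exp (-(p.1 ^ μ * p.2.1 ^ μ)) * f p.2.1) *
          (p.2.2 ^ (δ - 1) * Real.sin (p.1 ^ μ * p.2.2 ^ μ) * g p.2.2))
      (Ioi 0 ×ˢ Ioi 0 ×ˢ Ioi 0)) :
    ∫ y in Ioi (0:ℝ), y ^ (lam - 1) *
        (∫ t in Ioi (0:ℝ), t ^ (α - 1) * Real.exp (-(y ^ μ * t ^ μ)) * f t) *
        (∫ x in Ioi (0:ℝ), x ^ (δ - 1) * Real.sin (y ^ μ * x ^ μ) * g x)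
      = (1 / μ) * Real.Gamma (lam / μ) *
        ∫ t in Ioi (0:ℝ), t ^ (α - 1) * f t *
          ∫ x in Ioi (0:ℝ), x ^ (δ - 1) * (t ^ (2 * μ) + x ^ (2 * μ)) ^ (-(lam / (2 * μ))) *
            Real.sin ((lam / μ) * Real.arctan (x ^ μ / t ^ μ)) * g x := by
  have hlam' : 0 < lam := by
    have h2μ : (0:ℝ) < 2 * μ := by linarith
    have := mul_pos hlam h2μ
    rwa [div_mul_cancel₀ _ h2μ.ne'] at this
  set F : ℝ × ℝ × ℝ → ℝ := fun p =>
    p.1 ^ (lam - 1) *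
      (p.2.1 ^ (α - 1) * Real.exp (-(p.1 ^ μ * p.2.1 ^ μ)) * f p.2.1) *
      (p.2.2 ^ (δ - 1) * Real.sin (p.1 ^ μ * p.2.2 ^ μ) * g p.2.2) with hFdef
  set ν : Measure ℝ := volume.restrict (Ioi (0:ℝ)) with hν
  have hprodmeas : ν.prod (ν.prod ν) = volume.restrict ((Ioi 0) ×ˢ (Ioi 0) ×ˢ (Ioi 0)) := by
    rw [hν, Measure.prod_restrict, Measure.prod_restrict, ← Measure.volume_eq_prod,
      ← Measure.volume_eq_prod]
  have hF : Integrable F (ν.prod (ν.prod ν)) := by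
    rw [hprodmeas]; exact hint
  calc ∫ y in Ioi (0:ℝ), y ^ (lam - 1) *
        (∫ t in Ioi (0:ℝ), t ^ (α - 1) * Real.exp (-(y ^ μ * t ^ μ)) * f t) *
        (∫ x in Ioi (0:ℝ), x ^ (δ - 1) * Real.sin (y ^ μ * x ^ μ) * g x)
      = ∫ y in Ioi (0:ℝ), ∫ t in Ioi (0:ℝ), ∫ x in Ioi (0:ℝ), F (y, t, x) := by
        refine integral_congr_ae (Filter.Eventually.of_forall fun y => ?_)
        symm
        simp_rw [hFdef, integral_const_mul, integral_mul_const]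
        rw [integral_const_mul]
    _ = ∫ y in Ioi (0:ℝ), ∫ p, F (y, p) ∂(ν.prod ν) := by
        refine integral_congr_ae ?_
        filter_upwards [hF.prod_right_ae] with y hy
        exact (integral_prod _ hy).symm
    _ = ∫ p, (∫ y in Ioi (0:ℝ), F (y, p)) ∂(ν.prod ν) :=
        integral_integral_swap hF
    _ = ∫ t in Ioi (0:ℝ), ∫ x in Ioi (0:ℝ), ∫ y in Ioi (0:ℝ), F (y, t, x) :=
        integral_prod _ hF.swap.integral_prod_left
    _ = ∫ t in Ioi (0:ℝ), (1 / μ) * Real.Gamma (lam / μ) *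
          (t ^ (α - 1) * f t *
            ∫ x in Ioi (0:ℝ), x ^ (δ - 1) * (t ^ (2 * μ) + x ^ (2 * μ)) ^ (-(lam / (2 * μ))) *
              Real.sin ((lam / μ) * Real.arctan (x ^ μ / t ^ μ)) * g x) := by
        refine setIntegral_congr_fun measurableSet_Ioi fun t ht => ?_
        have hstep : ∀ x ∈ Ioi (0:ℝ), (∫ y in Ioi (0:ℝ), F (y, t, x))
            = ((1 / μ) * Real.Gamma (lam / μ) * (t ^ (α - 1) * f t)) *
              (x ^ (δ - 1) * (t ^ (2 * μ) + x ^ (2 * μ)) ^ (-(lam / (2 * μ))) *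
                Real.sin ((lam / μ) * Real.arctan (x ^ μ / t ^ μ)) * g x) := by
          intro x hx
          have e1 : (fun y => F (y, t, x))
              = fun y => (t ^ (α - 1) * f t * (x ^ (δ - 1) * g x)) *
                  (y ^ (lam - 1) * Real.exp (-(y ^ μ * t ^ μ)) * Real.sin (y ^ μ * x ^ μ)) := by
            funext y
            simp only [hFdef]
            ring
          rw [e1, integral_const_mul, key_integral hμ hlam' ht hx]
          ring
        rw [setIntegral_congr_fun measurableSet_Ioi hstep, integral_const_mul]
        ring
    _ = (1 / μ) * Real.Gamma (lam / μ) *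
        ∫ t in Ioi (0:ℝ), t ^ (α - 1) * f t *
          ∫ x in Ioi (0:ℝ), x ^ (δ - 1) * (t ^ (2 * μ) + x ^ (2 * μ)) ^ (-(lam / (2 * μ))) *
            Real.sin ((lam / μ) * Real.arctan (x ^ μ / t ^ μ)) * g x :=
        integral_const_mul _ _
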